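/- Every simplicial complex satisfying Serre's condition (S_2) over some field is normal, i.e., it is pure and the link of every face of codimension at least 2 is connected; conversely every such normal complex is (S_2) over every field. -/

import Mathlib

noncomputable section

/-! ## Singular homology machinery -/

namespace SimplexCategory

/-- The old Mathlib `SimplexCategory.toTopObj` (removed from Mathlib), restated verbatim. -/
def toTopObj (x : SimplexCategory) : Set (Fin (x.len + 1) → NNReal) :=
  {f | ∑ i, f i = 1}

/-- The old Mathlib `SimplexCategory.toTopMap` (removed from Mathlib), restated verbatim. -/
def toTopMap {x y : SimplexCategory} (f : x ⟶ y) (g : x.toTopObj) : y.toTopObj :=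
  ⟨fun i => ∑ j ∈ Finset.univ.filter (fun j => f.toOrderHom j = i), (g : Fin (x.len + 1) → NNReal) j, by
    simp only [toTopObj, Set.mem_ofPred_eq]
    rw [← Finset.sum_biUnion]
    · have hg : ∑ i, (g : Fin (x.len + 1) → NNReal) i = 1 := g.2
      convert hg
      simp [Finset.eq_univ_iff_forall]
    · convert Set.pairwiseDisjoint_filter _ _ _⟩

theorem continuous_toTopMap {x y : SimplexCategory} (f : x ⟶ y) : Continuous (toTopMap f) := by
  refine Continuous.subtype_mk (continuous_pi fun i => ?_) _
  exact continuous_finsetSum _ (fun j _ => (continuous_apply _).comp continuous_subtype_val)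

end SimplexCategory

/-- The topological standard `n`-simplex. -/
abbrev TopSimplex (n : ℕ) : Type := (SimplexCategory.mk n).toTopObj

/-- The `i`-th face inclusion of topological simplices, as a continuous map. -/
def faceIncl {n : ℕ} (i : Fin (n + 2)) : C(TopSimplex n, TopSimplex (n + 1)) :=
  ⟨SimplexCategory.toTopMap (SimplexCategory.δ i), SimplexCategory.continuous_toTopMap _⟩

/-- Singular `n`-chains of `X` with coefficients in `k`:
the free `k`-module on continuous maps from the standard `n`-simplex. -/
abbrev SChain (k : Type) [Field k] (X : Type*) [TopologicalSpace X] (n : ℕ) :=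
  C(TopSimplex n, X) →₀ k

variable (k : Type) [Field k]

/-- The singular boundary map `C_{n+1}(X) → C_n(X)`. -/
def sBoundary (X : Type*) [TopologicalSpace X] (n : ℕ) :
    SChain k X (n + 1) →ₗ[k] SChain k X n :=
  Finsupp.lsum k fun σ => ∑ i : Fin (n + 2),
    ((-1 : k) ^ (i : ℕ)) • Finsupp.lsingle (σ.comp (faceIncl i))

/-- The chain map induced by a continuous map. -/
def chainMap {A X : Type*} [TopologicalSpace A] [TopologicalSpace X] (f : C(A, X)) (n : ℕ) :
    SChain k A n →ₗ[k] SChain k X n :=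
  Finsupp.lmapDomain k k fun σ => f.comp σ

lemma chainMap_comm {A X : Type*} [TopologicalSpace A] [TopologicalSpace X] (f : C(A, X))
    (n : ℕ) :
    (sBoundary k X n).comp (chainMap k f (n + 1)) = (chainMap k f n).comp (sBoundary k A n) := by
  apply Finsupp.lhom_ext
  intro σ b
  simp only [LinearMap.coe_comp, Function.comp_apply, chainMap, Finsupp.lmapDomain_apply,
    Finsupp.mapDomain_single, sBoundary, Finsupp.lsum_single, LinearMap.sum_apply,
    Finset.sum_apply, LinearMap.smul_apply, Finsupp.lsingle_apply, map_sum,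
    Finsupp.mapDomain_smul, ContinuousMap.comp_assoc]

/-- Chains of `X` supported on a subspace `A ⊆ X`
(the image of the chains of `A` under the inclusion). -/
def subChains (X : Type*) [TopologicalSpace X] (A : Set X) (n : ℕ) :
    Submodule k (SChain k X n) :=
  LinearMap.range (chainMap k ⟨(Subtype.val : A → X), continuous_subtype_val⟩ n)

/-- Relative singular `n`-chains of the pair `(X, A)`. -/
abbrev RelChain (X : Type*) [TopologicalSpace X] (A : Set X) (n : ℕ) :=
  SChain k X n ⧸ subChains k X A n

lemma subChains_le (X : Type*) [TopologicalSpace X] (A : Set X) (n : ℕ) :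
    subChains k X A (n + 1) ≤ (subChains k X A n).comap (sBoundary k X n) := by
  rintro x ⟨y, rfl⟩
  exact ⟨sBoundary k A n y, (LinearMap.congr_fun (chainMap_comm k _ n) y).symm⟩

/-- The boundary map on relative singular chains. -/
def relBoundary (X : Type*) [TopologicalSpace X] (A : Set X) (n : ℕ) :
    RelChain k X A (n + 1) →ₗ[k] RelChain k X A n :=
  Submodule.mapQ _ _ (sBoundary k X n) (subChains_le k X A n)

/-- Relative singular cycles. -/
def relCycles (X : Type*) [TopologicalSpace X] (A : Set X) :
    (n : ℕ) → Submodule k (RelChain k X A n)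
  | 0 => ⊤
  | n + 1 => LinearMap.ker (relBoundary k X A n)

/-- Relative singular homology `H_n(X, A; k)`: cycles modulo boundaries. -/
def RelHomology (X : Type*) [TopologicalSpace X] (A : Set X) (n : ℕ) : Type _ :=
  ↥((relCycles k X A n).map (LinearMap.range (relBoundary k X A n)).mkQ)

/-- Local homology `H_n(X, X - p; k)`. -/
def LocalHomology (X : Type*) [TopologicalSpace X] (p : X) (n : ℕ) : Type _ :=
  RelHomology k X ({p}ᶜ) n

/-- Local homology with integer index (trivial in negative degrees). -/
def LocalHomologyZ (X : Type*) [TopologicalSpace X] (p : X) : ℤ → Type _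
  | .ofNat n => LocalHomology k X p n
  | .negSucc _ => PUnit

instance (X : Type*) [TopologicalSpace X] (p : X) (n : ℕ) :
    AddCommGroup (LocalHomology k X p n) := by
  unfold LocalHomology RelHomology; infer_instance

instance (X : Type*) [TopologicalSpace X] (p : X) (n : ℕ) :
    Module k (LocalHomology k X p n) := by
  unfold LocalHomology RelHomology; infer_instance

instance (X : Type*) [TopologicalSpace X] (p : X) (j : ℤ) :
    AddCommGroup (LocalHomologyZ k X p j) := by
  unfold LocalHomologyZ; cases j <;> infer_instance

instance (X : Type*) [TopologicalSpace X] (p : X) (j : ℤ) :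
    Module k (LocalHomologyZ k X p j) := by
  unfold LocalHomologyZ; cases j <;> infer_instance

/-- The augmentation map on singular `0`-chains. -/
def sAugment (X : Type*) [TopologicalSpace X] : SChain k X 0 →ₗ[k] k :=
  Finsupp.lsum k fun _ => LinearMap.id

/-- Reduced singular cycles (using the augmented chain complex). -/
def redCycles (X : Type*) [TopologicalSpace X] : (n : ℕ) → Submodule k (SChain k X n)
  | 0 => LinearMap.ker (sAugment k X)
  | n + 1 => LinearMap.ker (sBoundary k X n)

/-- Reduced singular homology `H̃_n(X; k)`. -/
def RedHomology (X : Type*) [TopologicalSpace X] (n : ℕ) : Type _ :=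
  ↥((redCycles k X n).map (LinearMap.range (sBoundary k X n)).mkQ)

/-! ## Abstract simplicial complexes and their geometric realization -/

/-- A (possibly empty) abstract simplicial complex on the vertex set `V`,
whose faces include the empty set whenever there is any face. -/
structure ASC (V : Type) where
  faces : Set (Finset V)
  down_closed : ∀ {s t : Finset V}, s ∈ faces → t ⊆ s → t ∈ faces

/-- The dimension of a face: its cardinality minus one. -/
def dimF {V : Type} (s : Finset V) : ℤ := (s.card : ℤ) - 1

namespace ASC

variable {V : Type}

/-- The link of a face `σ`. -/
def link [DecidableEq V] (K : ASC V) (σ : Finset V) : ASC V where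
  faces := {τ | τ ∩ σ = ∅ ∧ τ ∪ σ ∈ K.faces}
  down_closed := by
    rintro s t ⟨hd, hu⟩ hts
    refine ⟨Finset.subset_empty.mp ?_, K.down_closed hu (Finset.union_subset_union hts Finset.Subset.rfl)⟩
    rw [← hd]
    exact Finset.inter_subset_inter hts Finset.Subset.rfl

/-- A facet: an inclusion-maximal face. -/
def IsFacet (K : ASC V) (s : Finset V) : Prop :=
  s ∈ K.faces ∧ ∀ t ∈ K.faces, s ⊆ t → s = t

/-- The subcomplex of `K` generated by a given family of faces of `K`. -/
def gen (K : ASC V) (F : Set (Finset V)) : ASC V where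
  faces := {t | ∃ s ∈ F ∩ K.faces, t ⊆ s}
  down_closed := by rintro s t ⟨u, hu, hsu⟩ hts; exact ⟨u, hu, hts.trans hsu⟩

/-- `K^⟨m⟩`: the subcomplex generated by all facets of dimension at least `m`. -/
def aboveSkel (K : ASC V) (m : ℤ) : ASC V :=
  K.gen {s | K.IsFacet s ∧ m ≤ dimF s}

/-- `K^[m]`: the pure `m`-skeleton, generated by all `m`-dimensional faces. -/
def pureSkel (K : ASC V) (m : ℤ) : ASC V :=
  K.gen {s | dimF s = m}

/-- The `m`-skeleton: all faces of dimension at most `m`. -/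
def skel (K : ASC V) (m : ℤ) : ASC V where
  faces := {s | s ∈ K.faces ∧ dimF s ≤ m}
  down_closed := by
    rintro s t ⟨hs, hds⟩ hts
    refine ⟨K.down_closed hs hts, le_trans ?_ hds⟩
    simp only [dimF, sub_le_sub_iff_right, Nat.cast_le]
    exact Finset.card_le_card hts

/-- `K` has dimension `n`. -/
def hasDim (K : ASC V) (n : ℤ) : Prop :=
  (∃ s ∈ K.faces, dimF s = n) ∧ ∀ s ∈ K.faces, dimF s ≤ n

/-- The geometric realization of `K`, as a subset of `V → ℝ`. -/
def realizSet (K : ASC V) [Fintype V] : Set (V → ℝ) :=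
  {f | (∀ v, 0 ≤ f v) ∧ (∑ v, f v) = 1 ∧ ∃ s ∈ K.faces, ∀ v, f v ≠ 0 → v ∈ s}

/-- The geometric realization of `K`, as a topological space. -/
abbrev space (K : ASC V) [Fintype V] : Type _ := ↥(K.realizSet)

/-- The set of points of `|K|` lying in the realization of a subcomplex `L`. -/
def subSpace (K : ASC V) [Fintype V] (L : ASC V) : Set K.space :=
  {p | ∃ s ∈ L.faces, ∀ v, (p : V → ℝ) v ≠ 0 → v ∈ s}

/-- `p` lies in the (relative) interior of the face `σ`, i.e. the support of `p` is
exactly `σ`. -/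
def inInterior (K : ASC V) [Fintype V] (σ : Finset V) (p : K.space) : Prop :=
  ∀ v, (p : V → ℝ) v ≠ 0 ↔ v ∈ σ

end ASC

/-! ## Simplicial homology -/

/-- The `n`-dimensional faces of `K` (faces of cardinality `n+1`). -/
def FacesDim {V : Type} (K : ASC V) (n : ℕ) : Type _ :=
  {s : Finset V // s ∈ K.faces ∧ s.card = n + 1}

/-- Simplicial `n`-chains. -/
abbrev SimpChain {V : Type} (K : ASC V) (n : ℕ) : Type _ := FacesDim K n →₀ k

/-- The `i`-th vertex of a face of cardinality `n` (in the vertex order). -/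
def faceVertex {V : Type} [LinearOrder V] {n : ℕ} (s : Finset V) (hs : s.card = n)
    (i : Fin n) : V :=
  (s.sort (· ≤ ·))[(i : ℕ)]'(by rw [Finset.length_sort, hs]; exact i.isLt)

lemma faceVertex_mem {V : Type} [LinearOrder V] {n : ℕ} (s : Finset V) (hs : s.card = n)
    (i : Fin n) : faceVertex s hs i ∈ s :=
  (Finset.mem_sort _).mp (List.getElem_mem _)

/-- The simplicial boundary map. -/
def simpBoundary {V : Type} [LinearOrder V] (K : ASC V) (n : ℕ) :
    SimpChain k K (n + 1) →ₗ[k] SimpChain k K n :=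
  Finsupp.lsum k fun s => ∑ i : Fin (n + 2),
    ((-1 : k) ^ (i : ℕ)) • Finsupp.lsingle
      ⟨s.1.erase (faceVertex s.1 s.2.2 i),
        K.down_closed s.2.1 (Finset.erase_subset _ _), by
          rw [Finset.card_erase_of_mem (faceVertex_mem s.1 s.2.2 i), s.2.2]; omega⟩

/-- The simplicial augmentation map. -/
def simpAugment {V : Type} (K : ASC V) : SimpChain k K 0 →ₗ[k] k :=
  Finsupp.lsum k fun _ => LinearMap.id

/-- Reduced simplicial cycles (augmented chain complex). -/
def simpRedCycles {V : Type} [LinearOrder V] (K : ASC V) :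
    (n : ℕ) → Submodule k (SimpChain k K n)
  | 0 => (LinearMap.ker (simpAugment k K) : Submodule k (SimpChain k K 0))
  | n + 1 => LinearMap.ker (simpBoundary k K n)

/-- Reduced simplicial homology `H̃_n(K; k)` in degree `n : ℕ`. -/
def SimpRedHomology {V : Type} [LinearOrder V] (K : ASC V) (n : ℕ) : Type _ :=
  ↥((simpRedCycles k K n).map (LinearMap.range (simpBoundary k K n)).mkQ)

instance {V : Type} [LinearOrder V] (K : ASC V) (n : ℕ) :
    AddCommGroup (SimpRedHomology k K n) := by unfold SimpRedHomology; infer_instance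

instance {V : Type} [LinearOrder V] (K : ASC V) (n : ℕ) :
    Module k (SimpRedHomology k K n) := by unfold SimpRedHomology; infer_instance

/-- The cokernel of the simplicial augmentation: reduced homology in degree `-1`. -/
def augCoker {V : Type} (K : ASC V) : Type _ :=
  k ⧸ LinearMap.range (simpAugment k K)

instance {V : Type} (K : ASC V) : AddCommGroup (augCoker k K) := by
  unfold augCoker; infer_instance

instance {V : Type} (K : ASC V) : Module k (augCoker k K) := by
  unfold augCoker; infer_instance

/-- Reduced simplicial homology with integer index: in degree `-1` it is the cokernel of the
augmentation, and it is trivial in degrees below `-1`. -/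
def SimpRedHomologyZ {V : Type} [LinearOrder V] (K : ASC V) : ℤ → Type _
  | .ofNat n => SimpRedHomology k K n
  | .negSucc 0 => augCoker k K
  | .negSucc (_ + 1) => PUnit

instance {V : Type} [LinearOrder V] (K : ASC V) (j : ℤ) :
    AddCommGroup (SimpRedHomologyZ k K j) := by
  unfold SimpRedHomologyZ
  match j with
  | .ofNat n => infer_instance
  | .negSucc 0 => infer_instance
  | .negSucc (_ + 1) => infer_instance

instance {V : Type} [LinearOrder V] (K : ASC V) (j : ℤ) :
    Module k (SimpRedHomologyZ k K j) := by
  unfold SimpRedHomologyZ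
  match j with
  | .ofNat n => infer_instance
  | .negSucc 0 => infer_instance
  | .negSucc (_ + 1) => infer_instance

/-! ## Serre conditions -/

/-- Serre's condition `(S_r)` over `k` for a `(d-1)`-dimensional complex `K`. -/
def IsSerre {V : Type} [LinearOrder V] (K : ASC V) (d r : ℕ) : Prop :=
  ∀ σ ∈ K.faces, ∀ i : ℕ,
    (i : ℤ) < min ((r : ℤ) - 1) ((d : ℤ) - dimF σ - 2) →
      Subsingleton (SimpRedHomology k (K.link σ) i)

/-- Sequentially `(S_r)`: every pure `m`-skeleton (an `m`-dimensional complex) is `(S_r)`. -/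
def SeqSerre {V : Type} [LinearOrder V] (K : ASC V) (r : ℕ) : Prop :=
  ∀ m : ℕ, IsSerre k (K.pureSkel (m : ℤ)) (m + 1) r

/-! ## Topological notions -/

/-- The open unit ball in `ℝ^n`. -/
def openBall (n : ℕ) : Set (EuclideanSpace ℝ (Fin n)) := Metric.ball 0 1

/-- `p` has a neighborhood homeomorphic to an open `j`-dimensional ball. -/
def HasBallNbhd {X : Type*} [TopologicalSpace X] (p : X) (j : ℕ) : Prop :=
  ∃ U ∈ nhds p, Nonempty (↥U ≃ₜ ↥(openBall j))

/-- `D_j(X; k)`: the points with nonvanishing `j`-th local homology. -/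
def Dset (X : Type*) [TopologicalSpace X] (j : ℕ) : Set X :=
  {p | Nontrivial (LocalHomology k X p j)}

/-- `X^⟨m⟩`: the closure of the union of the `D_j(X; k)` for `j ≥ m`. -/
def aboveSet (X : Type*) [TopologicalSpace X] (m : ℕ) : Set X :=
  closure (⋃ j : ℕ, ⋃ _ : m ≤ j, Dset k X j)

/-- The dimension of a subset `S` of a space is at most `ℓ`: `S` contains no open ball of
dimension greater than `ℓ`.  (The empty set has negative dimension.) -/
def SetDimLE {X : Type*} [TopologicalSpace X] (S : Set X) (ℓ : ℤ) : Prop :=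
  ∀ n : ℕ, (∃ B : Set X, B ⊆ S ∧ Nonempty (↥B ≃ₜ ↥(openBall n))) → (n : ℤ) ≤ ℓ



/-! ## Auxiliary development: combinatorial connectivity -/

section AuxConn

variable {N : ℕ}

/-- Two vertices are adjacent if they span an edge (or coincide, as a vertex face). -/
def stepRel (L : ASC (Fin N)) (u v : Fin N) : Prop := ({u, v} : Finset (Fin N)) ∈ L.faces

/-- Combinatorial connectedness: any two vertices are joined by an edge path. -/
def CombConn (L : ASC (Fin N)) : Prop :=
  ∀ u v : Fin N, {u} ∈ L.faces → {v} ∈ L.faces →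
    Relation.ReflTransGen (stepRel L) u v

lemma stepRel_symm {L : ASC (Fin N)} {u v : Fin N} (h : stepRel L u v) : stepRel L v u := by
  unfold stepRel at h ⊢
  rwa [Finset.pair_comm]

/-- The vertex of a `0`-dimensional face. -/
def vtxOf {L : ASC (Fin N)} (s : FacesDim L 0) : Fin N :=
  s.1.min' (Finset.card_pos.mp (by rw [s.2.2]; omega))

lemma vtxOf_spec {L : ASC (Fin N)} (s : FacesDim L 0) : s.1 = {vtxOf s} := by
  obtain ⟨a, ha⟩ := Finset.card_eq_one.mp s.2.2
  have h2 : vtxOf s ∈ s.1 := Finset.min'_mem _ _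
  rw [ha] at h2 ⊢
  rw [Finset.mem_singleton] at h2
  rw [h2]

lemma vtxOf_eq {L : ASC (Fin N)} (s : FacesDim L 0) {a : Fin N} (h : s.1 = {a}) :
    vtxOf s = a := by
  have := (vtxOf_spec s).symm.trans h
  exact Finset.singleton_injective this

lemma faceVertex_lt {n : ℕ} (s : Finset (Fin N)) (hs : s.card = n) {i j : Fin n}
    (hij : i < j) : faceVertex s hs i < faceVertex s hs j := by
  have hson : (s.sort (· ≤ ·)).Pairwise (· < ·) := List.sortedLT_iff_pairwise.mp (Finset.sortedLT_sort s)
  exact List.pairwise_iff_getElem.mp hson _ _ _ _ hij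

lemma edge_eq {L : ASC (Fin N)} (t : FacesDim L 1) :
    t.1 = {faceVertex t.1 t.2.2 0, faceVertex t.1 t.2.2 1} := by
  have h01 : faceVertex t.1 t.2.2 0 < faceVertex t.1 t.2.2 1 :=
    faceVertex_lt _ _ (by norm_num)
  refine (Finset.eq_of_subset_of_card_le ?_ ?_).symm
  · intro x hx
    rcases Finset.mem_insert.mp hx with h | h
    · rw [h]; exact faceVertex_mem _ _ _
    · rw [Finset.mem_singleton.mp h]; exact faceVertex_mem _ _ _
  · have h2 : ({faceVertex t.1 t.2.2 0, faceVertex t.1 t.2.2 1} : Finset (Fin N)).card = 2 := by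
      rw [Finset.card_insert_of_notMem (by simp [h01.ne]), Finset.card_singleton]
    have h3 : t.1.card = 2 := t.2.2
    omega

lemma faceVertex_edge_ne {L : ASC (Fin N)} (t : FacesDim L 1) :
    faceVertex t.1 t.2.2 0 ≠ faceVertex t.1 t.2.2 1 :=
  (faceVertex_lt _ _ (by norm_num)).ne

lemma erase_pair_left {a b : Fin N} (h : a ≠ b) :
    ({a, b} : Finset (Fin N)).erase a = {b} := by
  ext x
  simp only [Finset.mem_erase, Finset.mem_insert, Finset.mem_singleton]
  constructor
  · rintro ⟨hxa, hx⟩; tauto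
  · rintro rfl; exact ⟨fun hc => h hc.symm, Or.inr rfl⟩

lemma erase_pair_right {a b : Fin N} (h : a ≠ b) :
    ({a, b} : Finset (Fin N)).erase b = {a} := by
  rw [Finset.pair_comm]
  exact erase_pair_left h.symm

lemma erase_irrel (i1 i2 : DecidableEq (Fin N)) (s : Finset (Fin N)) (a : Fin N) :
    @Finset.erase _ i1 s a = @Finset.erase _ i2 s a := by
  rw [Subsingleton.elim i1 i2]

/-- The boundary of a single edge. -/
lemma bdry_single {L : ASC (Fin N)} (t : FacesDim L 1) (c : k) (e0 e1 : FacesDim L 0)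
    (h0 : e0.1 = t.1.erase (faceVertex t.1 t.2.2 0))
    (h1 : e1.1 = t.1.erase (faceVertex t.1 t.2.2 1)) :
    simpBoundary k L 0 (Finsupp.single t c)
      = Finsupp.single e0 c - Finsupp.single e1 c := by
  rw [simpBoundary, Finsupp.lsum_single, Fin.sum_univ_two]
  simp only [LinearMap.add_apply, LinearMap.smul_apply, Finsupp.lsingle_apply,
    Fin.val_zero, Fin.val_one, pow_zero, pow_one, one_smul, neg_one_smul, sub_eq_add_neg]
  congr 1
  · exact congrArg (fun z => Finsupp.single z c)
      (Subtype.ext ((erase_irrel _ _ _ _).trans h0.symm))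
  · exact congrArg (fun z => -Finsupp.single z c)
      (Subtype.ext ((erase_irrel _ _ _ _).trans h1.symm))

lemma aug_single {L : ASC (Fin N)} (t : FacesDim L 0) (c : k) :
    simpAugment k L (Finsupp.single t c) = c := by
  rw [simpAugment, Finsupp.lsum_single]; rfl

open Classical in
/-- A linear functional on `0`-chains given by an indicator function on vertices. -/
def mkInd (L : ASC (Fin N)) (P : Fin N → Prop) : SimpChain k L 0 →ₗ[k] k :=
  Finsupp.lsum k fun s => if P (vtxOf s) then (LinearMap.id : k →ₗ[k] k) else 0

open Classical in
lemma mkInd_single (L : ASC (Fin N)) (P : Fin N → Prop) (s : FacesDim L 0) (c : k) :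
    mkInd k L P (Finsupp.single s c) = if P (vtxOf s) then c else 0 := by
  rw [mkInd, Finsupp.lsum_single]
  split <;> rfl

lemma homology_subsingleton_iff (L : ASC (Fin N)) :
    Subsingleton (SimpRedHomology k L 0) ↔
      ∀ x ∈ LinearMap.ker (simpAugment k L), x ∈ LinearMap.range (simpBoundary k L 0) := by
  have hcyc : simpRedCycles k L 0 = LinearMap.ker (simpAugment k L) := rfl
  constructor
  · intro h x hx
    have hmem : (LinearMap.range (simpBoundary k L 0)).mkQ x ∈
        (simpRedCycles k L 0).map (LinearMap.range (simpBoundary k L 0)).mkQ :=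
      ⟨x, by rw [hcyc]; exact hx, rfl⟩
    have h0 : ((LinearMap.range (simpBoundary k L 0)).mkQ x) = 0 := by
      unfold SimpRedHomology at h
      have := Subsingleton.elim
        (⟨_, hmem⟩ : ((simpRedCycles k L 0).map (LinearMap.range (simpBoundary k L 0)).mkQ))
        ⟨0, Submodule.zero_mem _⟩
      exact congrArg Subtype.val this
    rwa [Submodule.mkQ_apply, Submodule.Quotient.mk_eq_zero] at h0
  · intro h
    have hbot : (simpRedCycles k L 0).map (LinearMap.range (simpBoundary k L 0)).mkQ = ⊥ := by
      rw [Submodule.eq_bot_iff]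
      rintro y ⟨x, hx, rfl⟩
      rw [Submodule.mkQ_apply, Submodule.Quotient.mk_eq_zero]
      exact h x (by rwa [← hcyc])
    unfold SimpRedHomology
    rw [hbot]
    infer_instance

lemma combConn_of_subsingleton (L : ASC (Fin N))
    (h : Subsingleton (SimpRedHomology k L 0)) : CombConn L := by
  classical
  intro u v hu hv
  by_contra hnr
  set P : Fin N → Prop := fun w => Relation.ReflTransGen (stepRel L) u w with hP
  set su : FacesDim L 0 := ⟨{u}, hu, by simp⟩ with hsu
  set sv : FacesDim L 0 := ⟨{v}, hv, by simp⟩ with hsv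
  have hker : Finsupp.single su (1 : k) - Finsupp.single sv 1 ∈
      LinearMap.ker (simpAugment k L) := by
    rw [LinearMap.mem_ker, map_sub, aug_single, aug_single, sub_self]
  obtain ⟨c, hc⟩ := (homology_subsingleton_iff k L).mp h _ hker
  have hzero : (mkInd k L P).comp (simpBoundary k L 0) = 0 := by
    apply Finsupp.lhom_ext
    intro t b
    have hne : faceVertex t.1 t.2.2 0 ≠ faceVertex t.1 t.2.2 1 := faceVertex_edge_ne t
    have hedge : t.1 = {faceVertex t.1 t.2.2 0, faceVertex t.1 t.2.2 1} := edge_eq t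
    have he0 : t.1.erase (faceVertex t.1 t.2.2 0) = {faceVertex t.1 t.2.2 1} :=
      (congrArg (fun z => Finset.erase z (faceVertex t.1 t.2.2 0)) hedge).trans
        (erase_pair_left hne)
    have he1 : t.1.erase (faceVertex t.1 t.2.2 1) = {faceVertex t.1 t.2.2 0} :=
      (congrArg (fun z => Finset.erase z (faceVertex t.1 t.2.2 1)) hedge).trans
        (erase_pair_right hne)
    have hv0 : ({faceVertex t.1 t.2.2 1} : Finset (Fin N)) ∈ L.faces :=
      he0 ▸ L.down_closed t.2.1 (Finset.erase_subset _ _)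
    have hv1 : ({faceVertex t.1 t.2.2 0} : Finset (Fin N)) ∈ L.faces :=
      he1 ▸ L.down_closed t.2.1 (Finset.erase_subset _ _)
    have hstep : stepRel L (faceVertex t.1 t.2.2 0) (faceVertex t.1 t.2.2 1) := by
      unfold stepRel
      rw [← hedge]
      exact t.2.1
    have hPiff : P (faceVertex t.1 t.2.2 0) ↔ P (faceVertex t.1 t.2.2 1) :=
      ⟨fun hp => hp.tail hstep, fun hp => hp.tail (stepRel_symm hstep)⟩
    have hvx0 : vtxOf (⟨{faceVertex t.1 t.2.2 1}, hv0, by simp⟩ : FacesDim L 0)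
        = faceVertex t.1 t.2.2 1 := vtxOf_eq _ rfl
    have hvx1 : vtxOf (⟨{faceVertex t.1 t.2.2 0}, hv1, by simp⟩ : FacesDim L 0)
        = faceVertex t.1 t.2.2 0 := vtxOf_eq _ rfl
    rw [LinearMap.comp_apply, LinearMap.zero_apply,
      bdry_single k t b ⟨_, hv0, by simp⟩ ⟨_, hv1, by simp⟩ he0.symm he1.symm,
      map_sub]
    erw [mkInd_single, mkInd_single, hvx0, hvx1]
    by_cases hp0 : P (faceVertex t.1 t.2.2 0)
    · rw [if_pos (hPiff.mp hp0), if_pos hp0, sub_self]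
    · rw [if_neg (fun hcon => hp0 (hPiff.mpr hcon)), if_neg hp0, sub_self]
  have hval : mkInd k L P (Finsupp.single su (1 : k) - Finsupp.single sv 1) = 0 := by
    rw [← hc, ← LinearMap.comp_apply, hzero, LinearMap.zero_apply]
  rw [map_sub, mkInd_single, mkInd_single, vtxOf_eq su rfl, vtxOf_eq sv rfl] at hval
  have hPu : P u := Relation.ReflTransGen.refl
  rw [if_pos hPu, if_neg hnr, sub_zero] at hval
  exact one_ne_zero hval

/-- The difference of the two vertices of an edge is a boundary. -/
lemma edge_diff_mem (L : ASC (Fin N)) {b' b : Fin N} (hbeq : b' ≠ b)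
    (hstep : ({b', b} : Finset (Fin N)) ∈ L.faces)
    (hb' : {b'} ∈ L.faces) (hb : {b} ∈ L.faces) (c : k) :
    Finsupp.single (⟨{b'}, hb', by simp⟩ : FacesDim L 0) c -
      Finsupp.single (⟨{b}, hb, by simp⟩ : FacesDim L 0) c ∈
      LinearMap.range (simpBoundary k L 0) := by
  have hcard2 : ({b', b} : Finset (Fin N)).card = 1 + 1 := by
    rw [Finset.card_insert_of_notMem (by simp [hbeq]), Finset.card_singleton]
  set t1 : FacesDim L 1 := ⟨{b', b}, hstep, hcard2⟩ with ht1
  have hne : faceVertex t1.1 t1.2.2 0 ≠ faceVertex t1.1 t1.2.2 1 := faceVertex_edge_ne t1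
  have hedge : t1.1 = {faceVertex t1.1 t1.2.2 0, faceVertex t1.1 t1.2.2 1} := edge_eq t1
  have he0 : t1.1.erase (faceVertex t1.1 t1.2.2 0) = {faceVertex t1.1 t1.2.2 1} :=
    (congrArg (fun z => Finset.erase z (faceVertex t1.1 t1.2.2 0)) hedge).trans
      (erase_pair_left hne)
  have he1 : t1.1.erase (faceVertex t1.1 t1.2.2 1) = {faceVertex t1.1 t1.2.2 0} :=
    (congrArg (fun z => Finset.erase z (faceVertex t1.1 t1.2.2 1)) hedge).trans
      (erase_pair_right hne)
  have hbd : ∀ (c' : k) (z0 z1 : FacesDim L 0),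
      z0.1 = t1.1.erase (faceVertex t1.1 t1.2.2 0) →
      z1.1 = t1.1.erase (faceVertex t1.1 t1.2.2 1) →
      simpBoundary k L 0 (Finsupp.single t1 c')
        = Finsupp.single z0 c' - Finsupp.single z1 c' :=
    fun c' z0 z1 hz0 hz1 => bdry_single k t1 c' z0 z1 hz0 hz1
  have hmem0 : faceVertex t1.1 t1.2.2 0 ∈ ({b', b} : Finset (Fin N)) := faceVertex_mem _ _ _
  have hmem1 : faceVertex t1.1 t1.2.2 1 ∈ ({b', b} : Finset (Fin N)) := faceVertex_mem _ _ _
  rcases Finset.mem_insert.mp hmem0 with h0 | h0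
  · -- fv0 = b', hence fv1 = b
    have h1 : faceVertex t1.1 t1.2.2 1 = b := by
      rcases Finset.mem_insert.mp hmem1 with h1 | h1
      · exact absurd (h0.trans h1.symm) hne
      · exact Finset.mem_singleton.mp h1
    refine ⟨-Finsupp.single t1 c, ?_⟩
    have hz0 : ({b} : Finset (Fin N)) = t1.1.erase (faceVertex t1.1 t1.2.2 0) := by
      rw [he0, h1]
    have hz1 : ({b'} : Finset (Fin N)) = t1.1.erase (faceVertex t1.1 t1.2.2 1) := by
      rw [he1, h0]
    rw [map_neg, hbd c ⟨{b}, hb, by simp⟩ ⟨{b'}, hb', by simp⟩ hz0 hz1, neg_sub]; rfl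
  · -- fv0 = b, hence fv1 = b'
    have h0' : faceVertex t1.1 t1.2.2 0 = b := Finset.mem_singleton.mp h0
    have h1 : faceVertex t1.1 t1.2.2 1 = b' := by
      rcases Finset.mem_insert.mp hmem1 with h1 | h1
      · exact h1
      · exact absurd ((Finset.mem_singleton.mp h1).trans h0'.symm) (Ne.symm hne)
    refine ⟨Finsupp.single t1 c, ?_⟩
    have hz0 : ({b'} : Finset (Fin N)) = t1.1.erase (faceVertex t1.1 t1.2.2 0) := by
      rw [he0, h1]
    have hz1 : ({b} : Finset (Fin N)) = t1.1.erase (faceVertex t1.1 t1.2.2 1) := by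
      rw [he1, h0']
    exact hbd c ⟨{b'}, hb', by simp⟩ ⟨{b}, hb, by simp⟩ hz0 hz1

lemma subsingleton_of_combConn (L : ASC (Fin N)) (h : CombConn L) :
    Subsingleton (SimpRedHomology k L 0) := by
  rw [homology_subsingleton_iff]
  by_cases hne : Nonempty (FacesDim L 0)
  · obtain ⟨t0⟩ := hne
    have diff : ∀ (a b : Fin N) (ha : {a} ∈ L.faces),
        Relation.ReflTransGen (stepRel L) a b → ∀ (hb : {b} ∈ L.faces) (c : k),
        Finsupp.single (⟨{a}, ha, by simp⟩ : FacesDim L 0) c -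
          Finsupp.single (⟨{b}, hb, by simp⟩ : FacesDim L 0) c ∈
          LinearMap.range (simpBoundary k L 0) := by
      intro a b ha hr
      induction hr with
      | refl => intro hb c; rw [sub_self]; exact Submodule.zero_mem _
      | @tail b' b hr' hstep ih =>
          intro hb c
          have hb' : {b'} ∈ L.faces :=
            L.down_closed hstep (by intro x hx; rw [Finset.mem_singleton.mp hx]; simp)
          have step_mem : Finsupp.single (⟨{b'}, hb', by simp⟩ : FacesDim L 0) c -
              Finsupp.single (⟨{b}, hb, by simp⟩ : FacesDim L 0) c ∈
              LinearMap.range (simpBoundary k L 0) := by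
            by_cases hbeq : b' = b
            · subst hbeq; rw [sub_self]; exact Submodule.zero_mem _
            · exact edge_diff_mem k L hbeq hstep hb' hb c
          have := Submodule.add_mem _ (ih hb' c) step_mem
          erw [sub_add_sub_cancel] at this; exact this
    intro x hx
    have key : ∀ y : SimpChain k L 0,
        y - (simpAugment k L y) • Finsupp.single t0 (1 : k) ∈
          LinearMap.range (simpBoundary k L 0) := by
      intro y
      induction y using Finsupp.induction_linear with
      | zero => rw [map_zero, zero_smul, sub_zero]; exact Submodule.zero_mem _
      | add f g hf hg =>
          have := Submodule.add_mem _ hf hg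
          rw [map_add, add_smul]
          convert this using 1
          abel
      | single t c =>
          rw [aug_single]
          have hsm : (c : k) • Finsupp.single t0 (1 : k) = Finsupp.single t0 c := by
            rw [Finsupp.smul_single, smul_eq_mul, mul_one]
          rw [hsm]
          have hta : ({vtxOf t} : Finset (Fin N)) ∈ L.faces := by
            rw [← vtxOf_spec t]; exact t.2.1
          have ht0a : ({vtxOf t0} : Finset (Fin N)) ∈ L.faces := by
            rw [← vtxOf_spec t0]; exact t0.2.1
          have htv : t = ⟨{vtxOf t}, hta, by simp⟩ := Subtype.ext (vtxOf_spec t)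
          have ht0v : t0 = ⟨{vtxOf t0}, ht0a, by simp⟩ := Subtype.ext (vtxOf_spec t0)
          rw [htv, ht0v]
          exact diff (vtxOf t) (vtxOf t0) hta (h _ _ hta ht0a) ht0a c
    have := key x
    rwa [LinearMap.mem_ker.mp hx, zero_smul, sub_zero] at this
  · intro x hx
    have : x = 0 := by
      ext a
      exact absurd ⟨a⟩ hne
    rw [this]
    exact Submodule.zero_mem _

end AuxConn

/-! ## Topological connectivity of the realization -/

section AuxTop

variable {N : ℕ}

/-- The point of the realization corresponding to a vertex. -/
def vtxPoint (L : ASC (Fin N)) (v : Fin N) (hv : {v} ∈ L.faces) : L.space :=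
  ⟨fun w => if w = v then 1 else 0, by
    refine ⟨fun w => by by_cases h : w = v <;> simp [h], by simp, {v}, hv, fun w hw => ?_⟩
    by_cases h : w = v
    · rw [h]; exact Finset.mem_singleton_self v
    · simp [h] at hw⟩

lemma vtxPoint_support {L : ASC (Fin N)} {v : Fin N} (hv : {v} ∈ L.faces)
    (w : Fin N) (hw : ((vtxPoint L v hv : L.space) : Fin N → ℝ) w ≠ 0) : w = v := by
  by_contra h
  exact hw (by simp [vtxPoint, h])

lemma joined_of_common_face (L : ASC (Fin N)) (p q : L.space) (s : Finset (Fin N))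
    (hs : s ∈ L.faces) (hp : ∀ v, (p : Fin N → ℝ) v ≠ 0 → v ∈ s)
    (hq : ∀ v, (q : Fin N → ℝ) v ≠ 0 → v ∈ s) : Joined p q := by
  refine ⟨⟨⟨fun t => ⟨fun v => (1 - (t : ℝ)) * (p : Fin N → ℝ) v + (t : ℝ) * (q : Fin N → ℝ) v,
      ?_, ?_, s, hs, ?_⟩, ?_⟩, ?_, ?_⟩⟩
  · intro v
    have h1 : (0 : ℝ) ≤ 1 - (t : ℝ) := by have := t.2.2; linarith
    exact add_nonneg (mul_nonneg h1 (p.2.1 v)) (mul_nonneg t.2.1 (q.2.1 v))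
  · rw [Finset.sum_add_distrib, ← Finset.mul_sum, ← Finset.mul_sum, p.2.2.1, q.2.2.1]
    ring
  · intro v hv
    by_cases h1 : (p : Fin N → ℝ) v = 0
    · by_cases h2 : (q : Fin N → ℝ) v = 0
      · exfalso
        apply hv
        show (1 - (t : ℝ)) * (p : Fin N → ℝ) v + (t : ℝ) * (q : Fin N → ℝ) v = 0
        rw [h1, h2]
        ring
      · exact hq v h2
    · exact hp v h1
  · apply Continuous.subtype_mk
    apply continuous_pi
    intro v
    exact ((continuous_const.sub continuous_subtype_val).mul continuous_const).add
      (continuous_subtype_val.mul continuous_const)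
  · apply Subtype.ext
    funext v
    simp
  · apply Subtype.ext
    funext v
    simp

lemma connectedSpace_of_combConn (L : ASC (Fin N)) (h : CombConn L)
    (hv : ∃ v, {v} ∈ L.faces) : ConnectedSpace L.space := by
  obtain ⟨v0, hv0⟩ := hv
  have aux : ∀ (a : Fin N) (ha : {a} ∈ L.faces) (b : Fin N),
      Relation.ReflTransGen (stepRel L) a b → ∀ hb : {b} ∈ L.faces,
        Joined (vtxPoint L a ha) (vtxPoint L b hb) := by
    intro a ha b hr
    induction hr with
    | refl => intro hb; exact Joined.refl _
    | @tail b' b hr' hstep ih =>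
        intro hb
        have hb' : {b'} ∈ L.faces :=
          L.down_closed hstep (by intro x hx; rw [Finset.mem_singleton.mp hx]; simp)
        refine (ih hb').trans ?_
        refine joined_of_common_face L _ _ {b', b} hstep ?_ ?_
        · intro v hvv
          rw [vtxPoint_support hb' v hvv]
          simp
        · intro v hvv
          rw [vtxPoint_support hb v hvv]
          simp
  have hjoin : ∀ p q : L.space, Joined p q := by
    have vertex_of : ∀ p : L.space, ∃ (w : Fin N) (hw : {w} ∈ L.faces),
        Joined p (vtxPoint L w hw) := by
      intro p
      obtain ⟨hpos, hsum, s, hs, hsup⟩ := p.2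
      have hex : ∃ w, (p : Fin N → ℝ) w ≠ 0 := by
        by_contra hz
        push_neg at hz
        rw [Finset.sum_congr rfl (fun w _ => hz w)] at hsum
        simp at hsum
      obtain ⟨w, hw⟩ := hex
      have hws : w ∈ s := hsup w hw
      have hwv : {w} ∈ L.faces :=
        L.down_closed hs (by intro x hx; rwa [Finset.mem_singleton.mp hx])
      refine ⟨w, hwv, joined_of_common_face L p _ s hs hsup ?_⟩
      intro v hvv
      rw [vtxPoint_support hwv v hvv]
      exact hws
    intro p q
    obtain ⟨wp, hwp, hjp⟩ := vertex_of p
    obtain ⟨wq, hwq, hjq⟩ := vertex_of q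
    exact (hjp.trans (aux wp hwp wq (h wp wq hwp hwq) hwq)).trans hjq.symm
  have : PathConnectedSpace L.space := ⟨⟨vtxPoint L v0 hv0⟩, hjoin⟩
  exact this.connectedSpace

lemma combConn_of_connectedSpace (L : ASC (Fin N)) (h : ConnectedSpace L.space) :
    CombConn L := by
  classical
  intro u v hu hv
  by_contra hnr
  have hFc : Continuous (fun p : L.space =>
      ∑ w ∈ Finset.univ.filter (fun w => Relation.ReflTransGen (stepRel L) u w),
        (p : Fin N → ℝ) w) :=
    continuous_finset_sum _ fun w _ => (continuous_apply w).comp continuous_subtype_val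
  have dich : ∀ p : L.space,
      (∑ w ∈ Finset.univ.filter (fun w => Relation.ReflTransGen (stepRel L) u w),
        (p : Fin N → ℝ) w) = 1 ∨
      (∑ w ∈ Finset.univ.filter (fun w => Relation.ReflTransGen (stepRel L) u w),
        (p : Fin N → ℝ) w) = 0 := by
    intro p
    obtain ⟨hpos, hsum, s, hs, hsup⟩ := p.2
    by_cases hc : ∃ w, (p : Fin N → ℝ) w ≠ 0 ∧ Relation.ReflTransGen (stepRel L) u w
    · left
      obtain ⟨w0, hw0, hw0c⟩ := hc
      have hall : ∀ w, (p : Fin N → ℝ) w ≠ 0 → Relation.ReflTransGen (stepRel L) u w := by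
        intro w hw
        refine hw0c.tail ?_
        show ({w0, w} : Finset (Fin N)) ∈ L.faces
        refine L.down_closed hs ?_
        intro x hx
        rcases Finset.mem_insert.mp hx with hx | hx
        · rw [hx]; exact hsup w0 hw0
        · rw [Finset.mem_singleton.mp hx]; exact hsup w hw
      have hsteq : (∑ w ∈ Finset.univ.filter
            (fun w => Relation.ReflTransGen (stepRel L) u w), (p : Fin N → ℝ) w)
          = ∑ w, (p : Fin N → ℝ) w := by
        apply Finset.sum_subset (Finset.filter_subset _ _)
        intro w _ hwnot
        by_contra hpw
        exact hwnot (Finset.mem_filter.mpr ⟨Finset.mem_univ w, hall w hpw⟩)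
      rw [hsteq]
      exact hsum
    · right
      apply Finset.sum_eq_zero
      intro w hw
      by_contra hpw
      exact hc ⟨w, hpw, (Finset.mem_filter.mp hw).2⟩
  have hone : ∀ (w : Fin N) (hw : {w} ∈ L.faces),
      (∑ w' ∈ Finset.univ.filter (fun w' => Relation.ReflTransGen (stepRel L) u w'),
        ((vtxPoint L w hw : L.space) : Fin N → ℝ) w')
      = if Relation.ReflTransGen (stepRel L) u w then 1 else 0 := by
    intro w hw
    have hcongr : ∀ x ∈ Finset.univ.filter (fun w' => Relation.ReflTransGen (stepRel L) u w'),
        ((vtxPoint L w hw : L.space) : Fin N → ℝ) x = if x = w then (1 : ℝ) else 0 :=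
      fun x _ => rfl
    rw [Finset.sum_congr rfl hcongr, Finset.sum_ite_eq'
      (Finset.univ.filter (fun w' => Relation.ReflTransGen (stepRel L) u w')) w
      (fun _ => (1 : ℝ))]
    simp [Finset.mem_filter]
  set F : L.space → ℝ := fun p =>
    ∑ w ∈ Finset.univ.filter (fun w => Relation.ReflTransGen (stepRel L) u w),
      (p : Fin N → ℝ) w with hF
  have hFc' : Continuous F := hFc
  have hclosed : IsClosed (F ⁻¹' {1}) := IsClosed.preimage hFc' isClosed_singleton
  have hopen : IsOpen (F ⁻¹' {1}) := by
    have hcompl : F ⁻¹' {1} = (F ⁻¹' {0})ᶜ := by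
      ext p
      simp only [Set.mem_preimage, Set.mem_singleton_iff, Set.mem_compl_iff]
      have hd : F p = 1 ∨ F p = 0 := dich p
      rcases hd with h1 | h1 <;> rw [h1] <;> norm_num
    rw [hcompl]
    exact (IsClosed.preimage hFc' isClosed_singleton).isOpen_compl
  rcases isClopen_iff.mp ⟨hclosed, hopen⟩ with hA | hA
  · have h1 : F (vtxPoint L u hu)
        = if Relation.ReflTransGen (stepRel L) u u then 1 else 0 := hone u hu
    rw [if_pos Relation.ReflTransGen.refl] at h1
    have hmem : vtxPoint L u hu ∈ F ⁻¹' {1} := h1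
    rw [hA] at hmem
    exact hmem
  · have hmem : vtxPoint L v hv ∈ F ⁻¹' {1} := by rw [hA]; trivial
    have h2 : F (vtxPoint L v hv) = 1 := hmem
    have h3 : F (vtxPoint L v hv)
        = if Relation.ReflTransGen (stepRel L) u v then 1 else 0 := hone v hv
    rw [if_neg hnr, h2] at h3
    exact one_ne_zero h3

end AuxTop

/-! ## Facets and purity -/

section AuxPure

variable {N : ℕ}

lemma exists_facet (K : ASC (Fin N)) {s : Finset (Fin N)} (hs : s ∈ K.faces) :
    ∃ t, K.IsFacet t ∧ s ⊆ t := by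
  obtain ⟨t, ⟨ht, hst⟩, hmax⟩ := Set.Finite.exists_maximalFor
    (fun t : Finset (Fin N) => t.card) {t | t ∈ K.faces ∧ s ⊆ t} (Set.toFinite _)
    ⟨s, hs, Finset.Subset.refl s⟩
  refine ⟨t, ⟨ht, fun r hr htr => ?_⟩, hst⟩
  exact Finset.eq_of_subset_of_card_le htr
    (hmax ⟨hr, hst.trans htr⟩ (Finset.card_le_card htr))

lemma pure_of_links (K : ASC (Fin N)) (d : ℕ) (hd : K.hasDim ((d : ℤ) - 1))
    (H : ∀ ρ ∈ K.faces, dimF ρ ≤ (d : ℤ) - 3 → CombConn (K.link ρ)) :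
    ∀ τ, K.IsFacet τ → dimF τ = (d : ℤ) - 1 := by
  intro τ hτ
  by_contra hne
  have hle : dimF τ ≤ (d : ℤ) - 1 := hd.2 τ hτ.1
  have hcard : (τ.card : ℤ) ≤ (d : ℤ) - 1 := by
    simp only [dimF] at hle hne
    omega
  have claim : ∀ n : ℕ, ∀ ρ : Finset (Fin N), ρ ⊆ τ → (τ \ ρ).card ≤ n →
      ∀ s ∈ K.faces, ρ ⊆ s → s ⊆ τ := by
    intro n
    induction n with
    | zero =>
        intro ρ hρτ hcard0 s hs hρs
        have hρeq : ρ = τ := by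
          have hsd : τ \ ρ = ∅ := Finset.card_eq_zero.mp (Nat.le_zero.mp hcard0)
          exact Finset.Subset.antisymm hρτ (Finset.sdiff_eq_empty_iff_subset.mp hsd)
        rw [hρeq] at hρs
        rw [← hτ.2 s hs hρs]
    | succ n ih =>
        intro ρ hρτ hcardn s hs hρs
        by_cases heq : ρ = τ
        · rw [heq] at hρs
          rw [← hτ.2 s hs hρs]
        · have hssub : ρ ⊂ τ := ⟨hρτ, fun hcon => heq (Finset.Subset.antisymm hρτ hcon)⟩
          obtain ⟨w, hwτ, hwρ⟩ := Finset.exists_of_ssubset hssub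
          have hρK : ρ ∈ K.faces := K.down_closed hτ.1 hρτ
          have hρdim : dimF ρ ≤ (d : ℤ) - 3 := by
            have hlt : ρ.card < τ.card := Finset.card_lt_card hssub
            simp only [dimF]
            omega
          have hcc := H ρ hρK hρdim
          have hwv : {w} ∈ (K.link ρ).faces := by
            refine ⟨?_, K.down_closed hτ.1 ?_⟩
            · rw [Finset.singleton_inter_of_notMem hwρ]
            · intro x hx
              rcases Finset.mem_union.mp hx with hx | hx
              · rw [Finset.mem_singleton.mp hx]; exact hwτ
              · exact hρτ hx
          have inner : ∀ x, Relation.ReflTransGen (stepRel (K.link ρ)) w x → x ∈ τ := by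
            intro x hr
            induction hr with
            | refl => exact hwτ
            | @tail b x hr' hstep ih2 =>
                obtain ⟨hdis, hun⟩ := hstep
                have hbρ : b ∉ ρ := by
                  intro hb
                  have : b ∈ ({b, x} : Finset (Fin N)) ∩ ρ :=
                    Finset.mem_inter.mpr ⟨by simp, hb⟩
                  rw [hdis] at this
                  exact absurd this (Finset.notMem_empty b)
                have hsub1 : insert b ρ ⊆ τ := Finset.insert_subset ih2 hρτ
                have hcard1 : (τ \ insert b ρ).card ≤ n := by
                  have hsd : τ \ insert b ρ = (τ \ ρ).erase b := by
                    ext y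
                    simp only [Finset.mem_sdiff, Finset.mem_insert, Finset.mem_erase]
                    tauto
                  have hbmem : b ∈ τ \ ρ := Finset.mem_sdiff.mpr ⟨ih2, hbρ⟩
                  rw [hsd, Finset.card_erase_of_mem hbmem]
                  omega
                have := ih (insert b ρ) hsub1 hcard1 (({b, x} : Finset (Fin N)) ∪ ρ) hun (by
                  intro y hy
                  rcases Finset.mem_insert.mp hy with hy | hy
                  · rw [hy]
                    exact Finset.mem_union_left _ (by simp)
                  · exact Finset.mem_union_right _ hy)
                exact this (Finset.mem_union_left _ (by simp))
          intro v hv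
          by_cases hvρ : v ∈ ρ
          · exact hρτ hvρ
          · have hvv : {v} ∈ (K.link ρ).faces := by
              refine ⟨?_, K.down_closed hs ?_⟩
              · rw [Finset.singleton_inter_of_notMem hvρ]
              · intro x hx
                rcases Finset.mem_union.mp hx with hx | hx
                · rw [Finset.mem_singleton.mp hx]; exact hv
                · exact hρs hx
            exact inner v (hcc w v hwv hvv)
  obtain ⟨F, hF, hFdim⟩ := hd.1
  have hsub := claim τ.card ∅ (Finset.empty_subset τ) (by rw [Finset.sdiff_empty]) F hF
    (Finset.empty_subset F)
  have hcardF : F.card ≤ τ.card := Finset.card_le_card hsub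
  simp only [dimF] at hFdim
  omega

end AuxPure

/-- A `(d-1)`-dimensional complex is normal if it is pure and the link of every face of
codimension at least `2` is connected. -/
def IsNormal {V : Type} [DecidableEq V] [Fintype V] (K : ASC V) (d : ℕ) : Prop :=
  (∀ s : Finset V, K.IsFacet s → dimF s = (d : ℤ) - 1) ∧
  ∀ σ ∈ K.faces, dimF σ ≤ (d : ℤ) - 3 → ConnectedSpace (K.link σ).space

theorem serre_stmt_17 (N : ℕ) (K : ASC (Fin N)) (d : ℕ)
    (hd : K.hasDim ((d : ℤ) - 1)) :
    (∀ (k : Type) [Field k], IsSerre k K d 2 → IsNormal K d) ∧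
    (IsNormal K d → ∀ (k : Type) [Field k], IsSerre k K d 2) := by
  have hiota : ∀ (k : Type) [Field k] (i1 i2 : DecidableEq (Fin N)) (σ : Finset (Fin N)),
      Subsingleton (SimpRedHomology k (@ASC.link _ i1 K σ) 0) →
      Subsingleton (SimpRedHomology k (@ASC.link _ i2 K σ) 0) := by
    intro k _ i1 i2 σ hs
    rwa [Subsingleton.elim i2 i1]
  have hiotacc : ∀ (i1 i2 : DecidableEq (Fin N)) (σ : Finset (Fin N)),
      CombConn (@ASC.link _ i1 K σ) → CombConn (@ASC.link _ i2 K σ) := by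
    intro i1 i2 σ hs
    rwa [Subsingleton.elim i2 i1]
  constructor
  · intro k _ hS
    have hlinkcc : ∀ (inst : DecidableEq (Fin N)), ∀ ρ ∈ K.faces,
        dimF ρ ≤ (d : ℤ) - 3 → CombConn (@ASC.link _ inst K ρ) := by
      intro inst ρ hρ hdim
      have h0 := hS ρ hρ 0 (by
        rw [lt_min_iff]
        constructor
        · norm_num
        · push_cast
          linarith)
      exact combConn_of_subsingleton k _ (hiota k _ inst ρ h0)
    have hpure := pure_of_links K d hd (hlinkcc _)
    refine ⟨hpure, ?_⟩
    intro σ hσ hdim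
    obtain ⟨τ, hτ, hστ⟩ := exists_facet K hσ
    have hτd : dimF τ = (d : ℤ) - 1 := hpure τ hτ
    have hcard : σ.card < τ.card := by
      simp only [dimF] at hτd hdim
      omega
    have hssub : σ ⊂ τ := ⟨hστ, fun hcon => absurd (Finset.card_le_card hcon) (by omega)⟩
    obtain ⟨w, hwτ, hwσ⟩ := Finset.exists_of_ssubset hssub
    have hwlink : ∀ inst : DecidableEq (Fin N), {w} ∈ (@ASC.link _ inst K σ).faces := by
      intro inst
      refine ⟨?_, K.down_closed hτ.1 ?_⟩
      · rw [Finset.singleton_inter_of_notMem hwσ]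
      · intro x hx
        rcases Finset.mem_union.mp hx with hx | hx
        · rw [Finset.mem_singleton.mp hx]; exact hwτ
        · exact hστ hx
    exact connectedSpace_of_combConn _ (hlinkcc _ σ hσ hdim) ⟨w, hwlink _⟩
  · intro hN k _ σ hσ i hi
    rw [lt_min_iff] at hi
    obtain ⟨hi1, hi2⟩ := hi
    have hi0 : i = 0 := by omega
    subst hi0
    have hdim : dimF σ ≤ (d : ℤ) - 3 := by push_cast at hi2; linarith
    have hconn := hN.2 σ hσ hdim
    exact subsingleton_of_combConn k _
      (hiotacc _ _ σ (combConn_of_connectedSpace _ hconn))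

end
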